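/- Let H be a finitely generated free abelian group of rank at least 2 and let g, h ∈ H generate a rank 2 subgroup. Then the elements 1 − g and 1 − h are relatively prime in the group ring ℤ[H] (i.e., their gcd in the UFD ℤ[H] is a unit). -/

import Mathlib

namespace RelPrimeAux

variable {G : Type} [AddCommGroup G]

abbrev A (G : Type) [AddCommGroup G] := MonoidAlgebra ℤ (Multiplicative G)

lemma mem_supp_mul {f g : A G} {c : Multiplicative G} (hc : c ∈ (f * g).coeff.support) :
    ∃ c₁ ∈ f.coeff.support, ∃ c₂ ∈ g.coeff.support, c₁ * c₂ = c := by
  classical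
  have h := MonoidAlgebra.support_coeff_mul_subset f g hc
  rwa [Finset.mem_mul] at h

variable (v : Multiplicative G → ℤ)

lemma cross_lt (hv : ∀ x y : Multiplicative G, v (x * y) = v x + v y) {p q : A G} {Bp Bq : ℤ}
    (hp : ∀ x ∈ p.coeff.support, v x < Bp) (hq : ∀ x ∈ q.coeff.support, v x ≤ Bq) :
    ∀ x ∈ (p * q).coeff.support, v x < Bp + Bq := by
  intro x hx
  obtain ⟨c₁, h₁, c₂, h₂, rfl⟩ := mem_supp_mul hx
  rw [hv]
  exact add_lt_add_of_lt_of_le (hp _ h₁) (hq _ h₂)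

lemma top_attained [UniqueSums G] (hv : ∀ x y : Multiplicative G, v (x * y) = v x + v y)
    {f g : A G} (hf : f ≠ 0) (hg : g ≠ 0) :
    ∃ c ∈ (f * g).coeff.support,
      v c = f.coeff.support.sup' (Finsupp.support_nonempty_iff.2 (mt MonoidAlgebra.coeff_eq_zero.1 hf)) v
          + g.coeff.support.sup' (Finsupp.support_nonempty_iff.2 (mt MonoidAlgebra.coeff_eq_zero.1 hg)) v := by
  classical
  set Mf := f.coeff.support.sup' (Finsupp.support_nonempty_iff.2 (mt MonoidAlgebra.coeff_eq_zero.1 hf)) v with hMf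
  set Mg := g.coeff.support.sup' (Finsupp.support_nonempty_iff.2 (mt MonoidAlgebra.coeff_eq_zero.1 hg)) v with hMg
  set ftop : A G := MonoidAlgebra.ofCoeff (f.coeff.filter (fun c => v c = Mf)) with hftop
  set gtop : A G := MonoidAlgebra.ofCoeff (g.coeff.filter (fun c => v c = Mg)) with hgtop
  set frest : A G := f - ftop with hfrest
  set grest : A G := g - gtop with hgrest
  have hfsupp : ∀ x ∈ f.coeff.support, v x ≤ Mf := fun x hx => Finset.le_sup' v hx
  have hgsupp : ∀ x ∈ g.coeff.support, v x ≤ Mg := fun x hx => Finset.le_sup' v hx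
  have hftop_supp : ∀ x ∈ ftop.coeff.support, x ∈ f.coeff.support ∧ v x = Mf := by
    intro x hx
    rw [hftop, MonoidAlgebra.coeff_ofCoeff, Finsupp.support_filter, Finset.mem_filter] at hx
    exact hx
  have hgtop_supp : ∀ x ∈ gtop.coeff.support, x ∈ g.coeff.support ∧ v x = Mg := by
    intro x hx
    rw [hgtop, MonoidAlgebra.coeff_ofCoeff, Finsupp.support_filter, Finset.mem_filter] at hx
    exact hx
  have hfrest_supp : ∀ x ∈ frest.coeff.support, v x < Mf := by
    intro x hx
    rw [Finsupp.mem_support_iff] at hx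
    by_cases hxf : x ∈ f.coeff.support
    · rcases eq_or_lt_of_le (hfsupp x hxf) with he | hl
      · exact absurd (by
          rw [hfrest, MonoidAlgebra.coeff_sub, Finsupp.sub_apply, hftop, MonoidAlgebra.coeff_ofCoeff, Finsupp.filter_apply_pos (fun c => v c = Mf) f.coeff he, sub_self]) hx
      · exact hl
    · rw [Finsupp.notMem_support_iff] at hxf
      exact absurd (by
        rw [hfrest, MonoidAlgebra.coeff_sub, Finsupp.sub_apply, hxf, hftop, MonoidAlgebra.coeff_ofCoeff, Finsupp.filter_apply]
        simp [hxf]) hx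
  have hgrest_supp : ∀ x ∈ grest.coeff.support, v x < Mg := by
    intro x hx
    rw [Finsupp.mem_support_iff] at hx
    by_cases hxg : x ∈ g.coeff.support
    · rcases eq_or_lt_of_le (hgsupp x hxg) with he | hl
      · exact absurd (by
          rw [hgrest, MonoidAlgebra.coeff_sub, Finsupp.sub_apply, hgtop, MonoidAlgebra.coeff_ofCoeff, Finsupp.filter_apply_pos (fun c => v c = Mg) g.coeff he, sub_self]) hx
      · exact hl
    · rw [Finsupp.notMem_support_iff] at hxg
      exact absurd (by
        rw [hgrest, MonoidAlgebra.coeff_sub, Finsupp.sub_apply, hxg, hgtop, MonoidAlgebra.coeff_ofCoeff, Finsupp.filter_apply]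
        simp [hxg]) hx
  obtain ⟨cf, hcf, hcfv⟩ := Finset.exists_mem_eq_sup' (Finsupp.support_nonempty_iff.2 (mt MonoidAlgebra.coeff_eq_zero.1 hf)) v
  obtain ⟨cg, hcg, hcgv⟩ := Finset.exists_mem_eq_sup' (Finsupp.support_nonempty_iff.2 (mt MonoidAlgebra.coeff_eq_zero.1 hg)) v
  have hftopne : ftop ≠ 0 := by
    intro h
    have hh : ftop.coeff cf = f.coeff cf := Finsupp.filter_apply_pos (fun c => v c = Mf) f.coeff hcfv.symm
    rw [h] at hh
    exact Finsupp.mem_support_iff.1 hcf hh.symm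
  have hgtopne : gtop ≠ 0 := by
    intro h
    have hh : gtop.coeff cg = g.coeff cg := Finsupp.filter_apply_pos (fun c => v c = Mg) g.coeff hcgv.symm
    rw [h] at hh
    exact Finsupp.mem_support_iff.1 hcg hh.symm
  have hprodne : ftop * gtop ≠ 0 := mul_ne_zero hftopne hgtopne
  obtain ⟨c, hc⟩ := Finsupp.support_nonempty_iff.2 (mt MonoidAlgebra.coeff_eq_zero.1 hprodne)
  obtain ⟨c₁, h₁, c₂, h₂, hcc⟩ := mem_supp_mul hc
  have hvc : v c = Mf + Mg := by
    rw [← hcc, hv, (hftop_supp c₁ h₁).2, (hgtop_supp c₂ h₂).2]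
  refine ⟨c, ?_, hvc⟩
  have hsplit : f * g = ftop * gtop + (ftop * grest + frest * gtop + frest * grest) := by
    have hfe : f = ftop + frest := by rw [hfrest]; ring
    have hge : g = gtop + grest := by rw [hgrest]; ring
    calc f * g = (ftop + frest) * (gtop + grest) := by rw [← hfe, ← hge]
    _ = ftop * gtop + (ftop * grest + frest * gtop + frest * grest) := by ring
  have hc1 : ∀ x ∈ (ftop * grest).coeff.support, v x < Mf + Mg := by
    have h := cross_lt v hv hgrest_supp (fun x hx => (hftop_supp x hx).2.le)
    intro x hx
    rw [mul_comm] at hx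
    have h2 := h x hx
    linarith
  have hc2 : ∀ x ∈ (frest * gtop).coeff.support, v x < Mf + Mg :=
    cross_lt v hv hfrest_supp (fun x hx => (hgtop_supp x hx).2.le)
  have hc3 : ∀ x ∈ (frest * grest).coeff.support, v x < Mf + Mg :=
    cross_lt v hv hfrest_supp (fun x hx => (hgrest_supp x hx).le)
  have z1 : (ftop * grest).coeff c = 0 := by
    rw [← Finsupp.notMem_support_iff]
    intro h; exact (hc1 c h).ne hvc
  have z2 : (frest * gtop).coeff c = 0 := by
    rw [← Finsupp.notMem_support_iff]
    intro h; exact (hc2 c h).ne hvc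
  have z3 : (frest * grest).coeff c = 0 := by
    rw [← Finsupp.notMem_support_iff]
    intro h; exact (hc3 c h).ne hvc
  have heq : (f * g).coeff c = (ftop * gtop).coeff c := by
    rw [hsplit]; simp only [MonoidAlgebra.coeff_add, Finsupp.add_apply]; rw [z1, z2, z3]
    ring
  rw [Finsupp.mem_support_iff, heq]
  exact Finsupp.mem_support_iff.1 hc

lemma homog_divisor [UniqueSums G] (hv : ∀ x y : Multiplicative G, v (x * y) = v x + v y)
    {f g : A G} (hf : f ≠ 0) (hg : g ≠ 0)
    (h0 : ∀ c ∈ (f * g).coeff.support, v c = 0) :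
    ∀ c ∈ f.coeff.support, ∀ c' ∈ f.coeff.support, v c = v c' := by
  classical
  set w : Multiplicative G → ℤ := fun c => -(v c) with hw
  have hw' : ∀ x y : Multiplicative G, w (x * y) = w x + w y := by
    intro x y
    show -(v (x * y)) = -(v x) + -(v y)
    rw [hv]; ring
  obtain ⟨c, hc, hcv⟩ := top_attained v hv hf hg
  obtain ⟨d, hd, hdw⟩ := top_attained w hw' hf hg
  set Mf := f.coeff.support.sup' (Finsupp.support_nonempty_iff.2 (mt MonoidAlgebra.coeff_eq_zero.1 hf)) v with hMf
  set Mg := g.coeff.support.sup' (Finsupp.support_nonempty_iff.2 (mt MonoidAlgebra.coeff_eq_zero.1 hg)) v with hMg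
  set Nf := f.coeff.support.sup' (Finsupp.support_nonempty_iff.2 (mt MonoidAlgebra.coeff_eq_zero.1 hf)) w with hNf
  set Ng := g.coeff.support.sup' (Finsupp.support_nonempty_iff.2 (mt MonoidAlgebra.coeff_eq_zero.1 hg)) w with hNg
  have h1 : Mf + Mg = 0 := by rw [← hcv]; exact h0 c hc
  have h2 : Nf + Ng = 0 := by
    rw [← hdw]
    show -(v d) = 0
    rw [h0 d hd]; ring
  obtain ⟨cf, hcf, hcfv⟩ := Finset.exists_mem_eq_sup' (Finsupp.support_nonempty_iff.2 (mt MonoidAlgebra.coeff_eq_zero.1 hf)) v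
  obtain ⟨cg, hcg, hcgv⟩ := Finset.exists_mem_eq_sup' (Finsupp.support_nonempty_iff.2 (mt MonoidAlgebra.coeff_eq_zero.1 hg)) v
  have t1 : w cf ≤ Nf := Finset.le_sup' w hcf
  have t1' : w cf = -(v cf) := rfl
  have t2 : Mf = v cf := hcfv
  have u1 : w cg ≤ Ng := Finset.le_sup' w hcg
  have u1' : w cg = -(v cg) := rfl
  have u2 : Mg = v cg := hcgv
  intro x hx x' hx'
  have e1 : v x ≤ Mf := Finset.le_sup' v hx
  have e2 : v x' ≤ Mf := Finset.le_sup' v hx'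
  have e3 : w x ≤ Nf := Finset.le_sup' w hx
  have e3' : w x = -(v x) := rfl
  have e4 : w x' ≤ Nf := Finset.le_sup' w hx'
  have e4' : w x' = -(v x') := rfl
  omega

end RelPrimeAux

namespace RelPrimeAux2

variable {G : Type} [AddCommGroup G] [Module.Free ℤ G] [Module.Finite ℤ G]

lemma smul_eq_smul_of_forall {a x : G} (ha : a ≠ 0)
    (hx : ∀ φ : G →+ ℤ, φ a = 0 → φ x = 0) :
    ∃ m k : ℤ, m ≠ 0 ∧ m • x = k • a := by
  classical
  set B := Module.Free.chooseBasis ℤ G with hB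
  have hra : B.repr a ≠ 0 := by
    intro h
    apply ha
    have := B.repr.injective (a₁ := a) (a₂ := 0) (by simp [h])
    simpa using this
  obtain ⟨j, hj⟩ : ∃ j, B.repr a j ≠ 0 := by
    by_contra h
    push_neg at h
    exact hra (Finsupp.ext h)
  refine ⟨B.repr a j, B.repr x j, hj, ?_⟩
  apply B.repr.injective
  ext i
  have key : B.repr a j * B.repr x i = B.repr a i * B.repr x j := by
    set φL : G →ₗ[ℤ] ℤ := (B.repr a j) • (B.coord i) - (B.repr a i) • (B.coord j) with hφL
    have hφa : φL a = 0 := by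
      simp [hφL, Module.Basis.coord_apply, smul_eq_mul]
      ring
    have hφx := hx φL.toAddMonoidHom (by simpa using hφa)
    simp [hφL, Module.Basis.coord_apply, smul_eq_mul] at hφx
    linarith
  simp only [map_smul, Finsupp.smul_apply, smul_eq_mul]
  linarith

lemma eq_zero_of_two {a b x : G} (hab : LinearIndependent ℤ ![a, b])
    (hxa : ∀ φ : G →+ ℤ, φ a = 0 → φ x = 0)
    (hxb : ∀ φ : G →+ ℤ, φ b = 0 → φ x = 0) : x = 0 := by
  have ha : a ≠ 0 := by
    intro h
    exact hab.ne_zero 0 (by simp [h])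
  have hb : b ≠ 0 := by
    intro h
    exact hab.ne_zero 1 (by simp [h])
  obtain ⟨m, k, hm, hmk⟩ := smul_eq_smul_of_forall ha hxa
  obtain ⟨m', k', hm', hmk'⟩ := smul_eq_smul_of_forall hb hxb
  have h3 : (m' * k) • a = (m * k') • b := by
    calc (m' * k) • a = m' • k • a := mul_smul _ _ _
    _ = m' • m • x := by rw [hmk]
    _ = (m' * m) • x := (mul_smul _ _ _).symm
    _ = (m * m') • x := by rw [mul_comm]
    _ = m • m' • x := mul_smul _ _ _
    _ = m • k' • b := by rw [hmk']
    _ = (m * k') • b := (mul_smul _ _ _).symm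
  have h4 := (LinearIndependent.pair_iff.1 hab) (m' * k) (-(m * k')) (by
    rw [neg_smul, h3]; simp)
  have hk : k = 0 := by
    rcases mul_eq_zero.1 h4.1 with h | h
    · exact absurd h hm'
    · exact h
  have h5 : m • x = 0 := by rw [hmk, hk, zero_smul]
  have := smul_eq_zero.1 h5
  tauto

end RelPrimeAux2

namespace RelPrimeAux3

variable {G : Type} [AddCommGroup G]

lemma supp_one_sub (a : G) {sa : MonoidAlgebra ℤ (Multiplicative G)}
    (hsa : sa = 1 - MonoidAlgebra.single (Multiplicative.ofAdd a) 1) :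
    ∀ c ∈ sa.coeff.support, c = 1 ∨ c = Multiplicative.ofAdd a := by
  classical
  intro c hc
  rw [hsa, MonoidAlgebra.coeff_sub] at hc
  have h := Finsupp.support_sub hc
  rw [Finset.mem_union] at h
  rcases h with h | h
  · rw [MonoidAlgebra.one_def, MonoidAlgebra.coeff_single] at h
    have := Finsupp.support_single_subset h
    simp only [Finset.mem_singleton] at this
    exact Or.inl this
  · rw [MonoidAlgebra.coeff_single] at h
    have := Finsupp.support_single_subset h
    simp only [Finset.mem_singleton] at this
    exact Or.inr this

lemma one_sub_apply_one {a : G} (ha : a ≠ 0) {sa : MonoidAlgebra ℤ (Multiplicative G)}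
    (hsa : sa = 1 - MonoidAlgebra.single (Multiplicative.ofAdd a) 1) :
    sa.coeff 1 = 1 := by
  classical
  rw [hsa, MonoidAlgebra.coeff_sub, Finsupp.sub_apply, MonoidAlgebra.one_def,
    MonoidAlgebra.coeff_single, Finsupp.single_eq_same, MonoidAlgebra.coeff_single,
    Finsupp.single_eq_of_ne' (by simpa using ha), sub_zero]

lemma one_sub_ne_zero {a : G} (ha : a ≠ 0) {sa : MonoidAlgebra ℤ (Multiplicative G)}
    (hsa : sa = 1 - MonoidAlgebra.single (Multiplicative.ofAdd a) 1) :
    sa ≠ 0 := by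
  intro h
  have h2 := one_sub_apply_one ha hsa
  rw [h] at h2
  simp at h2

end RelPrimeAux3

open RelPrimeAux RelPrimeAux2 RelPrimeAux3 in
/-- Let `H` be a finitely generated free abelian group of rank at
least 2 (written multiplicatively as `Multiplicative G`), and let `g, h ∈ H` generate a
rank 2 subgroup (equivalently, the corresponding elements `a, b` of the additive group
are linearly independent over `ℤ`).  Then `1 - g` and `1 - h` are relatively prime in
the group ring `ℤ[H]`: every common divisor is a unit. -/
theorem one_sub_relPrime_of_rank_two
    {G : Type} [AddCommGroup G] [Module.Free ℤ G] [Module.Finite ℤ G]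
    (hrk : 2 ≤ Module.finrank ℤ G)
    (a b : G) (hab : LinearIndependent ℤ ![a, b]) :
    IsRelPrime (1 - MonoidAlgebra.of ℤ (Multiplicative G) (Multiplicative.ofAdd a))
      (1 - MonoidAlgebra.of ℤ (Multiplicative G) (Multiplicative.ofAdd b)) := by
  classical
  haveI : UniqueSums G := by
    let B := Module.Free.chooseBasis ℤ G
    exact UniqueSums.of_injective_addHom B.repr.toLinearMap.toAddMonoidHom.toAddHom
      B.repr.injective inferInstance
  have ha : a ≠ 0 := fun h => hab.ne_zero 0 (by simp [h])
  have hb : b ≠ 0 := fun h => hab.ne_zero 1 (by simp [h])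
  intro d hda hdb
  rw [MonoidAlgebra.of_apply] at hda hdb
  obtain ⟨u, hu⟩ := hda
  obtain ⟨w, hw⟩ := hdb
  set sa : MonoidAlgebra ℤ (Multiplicative G) :=
    1 - MonoidAlgebra.single (Multiplicative.ofAdd a) 1 with hsa
  set sb : MonoidAlgebra ℤ (Multiplicative G) :=
    1 - MonoidAlgebra.single (Multiplicative.ofAdd b) 1 with hsb
  have hsane : sa ≠ 0 := one_sub_ne_zero ha hsa
  have hsbne : sb ≠ 0 := one_sub_ne_zero hb hsb
  have hd0 : d ≠ 0 := by
    intro h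
    rw [h, zero_mul] at hu
    exact hsane hu
  have hu0 : u ≠ 0 := by
    intro h
    rw [h, mul_zero] at hu
    exact hsane hu
  have hw0 : w ≠ 0 := by
    intro h
    rw [h, mul_zero] at hw
    exact hsbne hw
  -- for every functional killing a, it is constant on the support of d
  have hconsta : ∀ (φ : G →+ ℤ), φ a = 0 →
      ∀ c ∈ d.coeff.support, ∀ c' ∈ d.coeff.support, φ c.toAdd = φ c'.toAdd := by
    intro φ hφa
    have hv : ∀ x y : Multiplicative G,
        (fun c : Multiplicative G => φ c.toAdd) (x * y)
          = (fun c : Multiplicative G => φ c.toAdd) x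
            + (fun c : Multiplicative G => φ c.toAdd) y :=
      fun x y => map_add φ x.toAdd y.toAdd
    have h0 : ∀ c ∈ (d * u).coeff.support, (fun c : Multiplicative G => φ c.toAdd) c = 0 := by
      intro c hc
      rw [← hu] at hc
      rcases supp_one_sub a hsa c hc with h | h
      · subst h; simpa using map_zero φ
      · subst h; exact hφa
    exact homog_divisor _ hv hd0 hu0 h0
  have hconstb : ∀ (φ : G →+ ℤ), φ b = 0 →
      ∀ c ∈ d.coeff.support, ∀ c' ∈ d.coeff.support, φ c.toAdd = φ c'.toAdd := by
    intro φ hφb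
    have hv : ∀ x y : Multiplicative G,
        (fun c : Multiplicative G => φ c.toAdd) (x * y)
          = (fun c : Multiplicative G => φ c.toAdd) x
            + (fun c : Multiplicative G => φ c.toAdd) y :=
      fun x y => map_add φ x.toAdd y.toAdd
    have h0 : ∀ c ∈ (d * w).coeff.support, (fun c : Multiplicative G => φ c.toAdd) c = 0 := by
      intro c hc
      rw [← hw] at hc
      rcases supp_one_sub b hsb c hc with h | h
      · subst h; simpa using map_zero φ
      · subst h; exact hφb
    exact homog_divisor _ hv hd0 hw0 h0
  -- hence the support of d is a single point
  have key : ∀ c ∈ d.coeff.support, ∀ c' ∈ d.coeff.support, c = c' := by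
    intro c hc c' hc'
    have hx0 : c.toAdd - c'.toAdd = 0 := by
      apply eq_zero_of_two hab
      · intro φ hφ
        rw [map_sub, hconsta φ hφ c hc c' hc', sub_self]
      · intro φ hφ
        rw [map_sub, hconstb φ hφ c hc c' hc', sub_self]
    have : c.toAdd = c'.toAdd := by
      have := sub_eq_zero.1 hx0
      exact this
    exact Multiplicative.toAdd.injective this
  obtain ⟨c₀, hc₀⟩ := Finsupp.support_nonempty_iff.2 (mt MonoidAlgebra.coeff_eq_zero.1 hd0)
  have hsupp : d.coeff.support ⊆ {c₀} := by
    intro c hc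
    exact Finset.mem_singleton.2 (key c hc c₀ hc₀)
  have hdsingle : d = MonoidAlgebra.single c₀ (d.coeff c₀) :=
    MonoidAlgebra.coeff_injective (Finsupp.support_subset_singleton.1 hsupp)
  set r : ℤ := d.coeff c₀ with hr
  have heval : r * u.coeff (c₀⁻¹ * 1) = 1 := by
    have h1 : sa.coeff 1 = 1 := one_sub_apply_one ha hsa
    rw [hu, hdsingle] at h1
    rw [← MonoidAlgebra.coeff_single_mul_apply u r c₀ 1]
    exact h1
  have hrunit : IsUnit r := IsUnit.of_mul_eq_one _ heval
  have hrr : r * r = 1 := by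
    rcases Int.isUnit_iff.1 hrunit with h | h <;> rw [h] <;> norm_num
  rw [hdsingle]
  refine IsUnit.of_mul_eq_one (MonoidAlgebra.single c₀⁻¹ r) ?_
  show (MonoidAlgebra.single c₀ (d.coeff c₀) * MonoidAlgebra.single c₀⁻¹ r :
    MonoidAlgebra ℤ (Multiplicative G)) = 1
  rw [MonoidAlgebra.single_mul_single, mul_inv_cancel, hrr, ← MonoidAlgebra.one_def]
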